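/- Let $g_0$ be a nonvanishing $C^2$ solution of $-g_0'' + q g_0 = 0$, and let $u_1 = g_0 \sum_{\text{even } n} \frac{\omega^n}{n!} \widetilde{X}^{(n)}$ solve $-u_1'' + (q + \omega^2) u_1 = 0$. Then the Darboux transform $v_1 = u_1' - \frac{g_0'}{g_0} u_1$ equals $\frac{\omega}{g_0} \sum_{\text{odd } n \geq 1} \frac{\omega^n}{n!} \widetilde{X}^{(n)}$ and satisfies the transformed Schrödinger equation $-v_1'' + (r + \omega^2) v_1 = 0$ where $r = 2 (g_0'/g_0)^2 - q$. -/

import Mathlib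

open scoped Nat

/-- The SPPS recursive integrals: `spps wodd weven 0 ≡ 1` and
`spps wodd weven n x = n ∫₀ˣ spps wodd weven (n-1) · w`, where the weight `w`
is `wodd` when `n` is odd and `weven` when `n` is even. -/
noncomputable def spps (wodd weven : ℝ → ℂ) : ℕ → ℝ → ℂ
  | 0 => fun _ => 1
  | n + 1 => fun x => (n + 1 : ℂ) *
      ∫ t in (0:ℝ)..x,
        spps wodd weven n t * (if (n + 1) % 2 = 1 then wodd t else weven t)


lemma integral_abs_pow_of_nonneg (n : ℕ) {x : ℝ} (hx : 0 ≤ x) :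
    (∫ t in (0:ℝ)..x, |t| ^ n) = x ^ (n+1) / (n+1) := by
  rw [intervalIntegral.integral_congr (g := fun t => t ^ n)
    (fun t ht => by
      rw [Set.uIcc_of_le hx] at ht
      simp [abs_of_nonneg ht.1]),
    integral_pow]
  simp

lemma abs_integral_abs_pow (n : ℕ) (x : ℝ) :
    |∫ t in (0:ℝ)..x, |t| ^ n| = |x| ^ (n+1) / (n+1) := by
  rcases le_or_gt 0 x with hx | hx
  · rw [integral_abs_pow_of_nonneg n hx, abs_of_nonneg (by positivity), abs_of_nonneg hx]
  · have h1 : (∫ t in (0:ℝ)..x, |t| ^ n) = ∫ t in (0:ℝ)..x, |(-t)| ^ n := by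
      simp
    rw [h1, intervalIntegral.integral_comp_neg (fun t => |t| ^ n)]
    rw [show -(0:ℝ) = 0 by ring, intervalIntegral.integral_symm,
      integral_abs_pow_of_nonneg n (by linarith : (0:ℝ) ≤ -x)]
    rw [abs_of_neg hx, abs_neg, abs_of_nonneg (div_nonneg (pow_nonneg (by linarith) _) (by positivity))]

lemma summable_aux (r : ℝ) (m : ℕ → ℕ) (hm : Function.Injective m) :
    Summable (fun k => r ^ m k / (m k)! : ℕ → ℝ) :=
  (Real.summable_pow_div_factorial r).comp_injective hm

lemma spps_aux (a b : ℝ) (ha : a < 0) (hb : 0 < b) (wo we : ℝ → ℂ)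
    (hwo : ContinuousOn wo (Set.Ioo a b)) (hwe : ContinuousOn we (Set.Ioo a b))
    (N : ℝ) (hN : 0 ≤ N)
    (hbo : ∀ x ∈ Set.Ioo a b, ‖wo x‖ ≤ N) (hbe : ∀ x ∈ Set.Ioo a b, ‖we x‖ ≤ N) :
    ∀ n : ℕ, ContinuousOn (spps wo we n) (Set.Ioo a b) ∧
      (∀ x ∈ Set.Ioo a b, ‖spps wo we n x‖ ≤ (N * |x|) ^ n) ∧
      (∀ x ∈ Set.Ioo a b, HasDerivAt (spps wo we (n+1))
        ((n+1 : ℂ) * spps wo we n x *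
          (if (n+1) % 2 = 1 then wo x else we x)) x) := by
  have h0 : (0:ℝ) ∈ Set.Ioo a b := ⟨ha, hb⟩
  -- weight continuity
  have hW : ∀ n : ℕ, ContinuousOn (fun t => if (n+1) % 2 = 1 then wo t else we t)
      (Set.Ioo a b) := by
    intro n; split_ifs <;> assumption
  have hWb : ∀ n : ℕ, ∀ x ∈ Set.Ioo a b,
      ‖if (n+1) % 2 = 1 then wo x else we x‖ ≤ N := by
    intro n x hx; split_ifs
    · exact hbo x hx
    · exact hbe x hx
  -- generic step: continuity of level n gives derivative of level n+1
  have hstep : ∀ n : ℕ, ContinuousOn (spps wo we n) (Set.Ioo a b) →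
      ∀ x ∈ Set.Ioo a b, HasDerivAt (spps wo we (n+1))
        ((n+1 : ℂ) * spps wo we n x *
          (if (n+1) % 2 = 1 then wo x else we x)) x := by
    intro n hc x hx
    set F : ℝ → ℂ := fun t => spps wo we n t * (if (n+1) % 2 = 1 then wo t else we t)
      with hF
    have hFc : ContinuousOn F (Set.Ioo a b) := hc.mul (hW n)
    have hsub : Set.uIcc (0:ℝ) x ⊆ Set.Ioo a b :=
      Set.ordConnected_Ioo.uIcc_subset h0 hx
    have hint : IntervalIntegrable F MeasureTheory.volume 0 x :=
      (hFc.mono hsub).intervalIntegrable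
    have hd : HasDerivAt (fun y => ∫ t in (0:ℝ)..y, F t) (F x) x :=
      intervalIntegral.integral_hasDerivAt_right hint
        (hFc.stronglyMeasurableAtFilter isOpen_Ioo x hx)
        (hFc.continuousAt (isOpen_Ioo.mem_nhds hx))
    have := hd.const_mul ((n:ℂ)+1)
    rw [show spps wo we (n+1) = fun y => ((n:ℂ)+1) * ∫ t in (0:ℝ)..y, F t from rfl]
    convert this using 1
    rfl
    rw [hF]; ring
  -- main induction
  intro n
  induction n with
  | zero =>
    refine ⟨continuousOn_const, fun x hx => by simp [spps], ?_⟩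
    exact hstep 0 continuousOn_const
  | succ n ih =>
    obtain ⟨hc, hbnd, hd⟩ := ih
    have hc' : ContinuousOn (spps wo we (n+1)) (Set.Ioo a b) := fun x hx =>
      ((hd x hx).differentiableAt.continuousAt).continuousWithinAt
    refine ⟨hc', ?_, hstep (n+1) hc'⟩
    intro x hx
    have hsub : Set.uIcc (0:ℝ) x ⊆ Set.Ioo a b :=
      Set.ordConnected_Ioo.uIcc_subset h0 hx
    have hFb : ∀ t ∈ Set.uIoc (0:ℝ) x,
        ‖spps wo we n t * (if (n+1) % 2 = 1 then wo t else we t)‖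
          ≤ N ^ (n+1) * |t| ^ n := by
      intro t ht
      have ht' : t ∈ Set.Ioo a b := hsub (Set.uIoc_subset_uIcc ht)
      rw [norm_mul]
      calc ‖spps wo we n t‖ * ‖if (n+1) % 2 = 1 then wo t else we t‖
          ≤ (N * |t|) ^ n * N :=
            mul_le_mul (hbnd t ht') (hWb n t ht') (norm_nonneg _)
              (by positivity)
        _ = N ^ (n+1) * |t| ^ n := by rw [mul_pow]; ring
    have hgint : IntervalIntegrable (fun t => N ^ (n+1) * |t| ^ n)
        MeasureTheory.volume 0 x :=
      ((continuous_const.mul (continuous_abs.pow n)).intervalIntegrable 0 x)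
    have key : ‖∫ t in (0:ℝ)..x,
        spps wo we n t * (if (n+1) % 2 = 1 then wo t else we t)‖
        ≤ |∫ t in (0:ℝ)..x, N ^ (n+1) * |t| ^ n| := by
      apply intervalIntegral.norm_integral_le_abs_of_norm_le ?_ hgint
      exact (MeasureTheory.ae_restrict_iff' measurableSet_uIoc).2
        (Filter.Eventually.of_forall hFb)
    have hval : |∫ t in (0:ℝ)..x, N ^ (n+1) * |t| ^ n|
        = N ^ (n+1) * (|x| ^ (n+1) / (n+1)) := by
      rw [intervalIntegral.integral_const_mul, abs_mul,
        abs_of_nonneg (by positivity : (0:ℝ) ≤ N ^ (n+1)),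
        abs_integral_abs_pow]
    rw [show spps wo we (n+1) x = ((n:ℂ)+1) * ∫ t in (0:ℝ)..x,
        spps wo we n t * (if (n+1) % 2 = 1 then wo t else we t) from rfl]
    rw [norm_mul]
    have hn : ‖((n:ℂ)+1)‖ = (n:ℝ)+1 := by
      rw [show ((n:ℂ)+1) = ((n+1 : ℕ) : ℂ) by push_cast; ring, Complex.norm_natCast]
      push_cast; ring
    rw [hn]
    calc ((n:ℝ)+1) * ‖∫ t in (0:ℝ)..x,
          spps wo we n t * (if (n+1) % 2 = 1 then wo t else we t)‖
        ≤ ((n:ℝ)+1) * (N ^ (n+1) * (|x| ^ (n+1) / (n+1))) := by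
          rw [← hval]
          exact mul_le_mul_of_nonneg_left key (by positivity)
      _ = (N * |x|) ^ (n+1) := by
          rw [mul_pow]
          field_simp


set_option maxHeartbeats 1600000 in
/-- The Darboux transform `v₁ = u₁' - (g₀'/g₀) u₁` of the SPPS solution
`u₁ = g₀ ∑_{even n} ωⁿ/n! X̃⁽ⁿ⁾` equals `(ω/g₀) ∑_{odd n} ωⁿ/n! X̃⁽ⁿ⁾` and
solves `-v₁'' + (r + ω²) v₁ = 0` with `r = 2(g₀'/g₀)² - q`. -/
theorem darboux_transform_u1 (a b : ℝ) (ha : a < 0) (hb : 0 < b) (ω : ℂ)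
    (q g0 : ℝ → ℂ)
    (hq : ContinuousOn q (Set.Ioo a b))
    (hg : ContDiffOn ℝ 2 g0 (Set.Ioo a b))
    (hg0 : ∀ x ∈ Set.Ioo a b, g0 x ≠ 0)
    (heq : ∀ x ∈ Set.Ioo a b, deriv (deriv g0) x = q x * g0 x)
    (hbd : ∃ M : ℝ, ∀ x ∈ Set.Ioo a b, ‖g0 x‖ ≤ M ∧ ‖(g0 x)⁻¹‖ ≤ M)
    (u1 v1 : ℝ → ℂ)
    (hu1 : u1 = fun x => g0 x * ∑' k : ℕ,
      ω ^ (2 * k) / ((2 * k)! : ℂ) *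
        spps (fun t => g0 t ^ 2) (fun t => (g0 t ^ 2)⁻¹) (2 * k) x)
    (hv1 : v1 = fun x => deriv u1 x - deriv g0 x / g0 x * u1 x) :
    (∀ x ∈ Set.Ioo a b,
      v1 x = ω / g0 x * ∑' k : ℕ,
        ω ^ (2 * k + 1) / ((2 * k + 1)! : ℂ) *
          spps (fun t => g0 t ^ 2) (fun t => (g0 t ^ 2)⁻¹) (2 * k + 1) x) ∧
    (∀ x ∈ Set.Ioo a b,
      -(deriv (deriv v1) x) +
        ((2 * (deriv g0 x / g0 x) ^ 2 - q x) + ω ^ 2) * v1 x = 0) := by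
  obtain ⟨M, hM⟩ := hbd
  have h0 : (0:ℝ) ∈ Set.Ioo a b := ⟨ha, hb⟩
  have hMnn : 0 ≤ M := le_trans (norm_nonneg _) (hM 0 h0).1
  set X : ℕ → ℝ → ℂ := spps (fun t => g0 t ^ 2) (fun t => (g0 t ^ 2)⁻¹) with hXdef
  set C : ℝ := max (-a) b with hCdef
  have hCpos : 0 < C := lt_of_lt_of_le hb (le_max_right _ _)
  have habs : ∀ x ∈ Set.Ioo a b, |x| ≤ C := by
    intro x hx
    rw [abs_le]
    constructor
    · have : -C ≤ a := by simp [hCdef]; linarith [le_max_left (-a) b]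
      linarith [hx.1]
    · linarith [hx.2, le_max_right (-a) b]
  have hg0c : ContinuousOn g0 (Set.Ioo a b) := hg.continuousOn
  -- continuity / bounds on the two weights
  have hwoc : ContinuousOn (fun t => g0 t ^ 2) (Set.Ioo a b) := hg0c.pow 2
  have hwec : ContinuousOn (fun t => (g0 t ^ 2)⁻¹) (Set.Ioo a b) :=
    hwoc.inv₀ fun x hx => pow_ne_zero 2 (hg0 x hx)
  have hbo : ∀ x ∈ Set.Ioo a b, ‖g0 x ^ 2‖ ≤ M ^ 2 := by
    intro x hx
    rw [norm_pow]
    exact pow_le_pow_left₀ (norm_nonneg _) (hM x hx).1 2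
  have hbe : ∀ x ∈ Set.Ioo a b, ‖(g0 x ^ 2)⁻¹‖ ≤ M ^ 2 := by
    intro x hx
    rw [← inv_pow, norm_pow]
    exact pow_le_pow_left₀ (norm_nonneg _) (hM x hx).2 2
  have hXall := spps_aux a b ha hb _ _ hwoc hwec (M ^ 2) (by positivity) hbo hbe
  rw [← hXdef] at hXall
  have hXc : ∀ n, ContinuousOn (X n) (Set.Ioo a b) := fun n => (hXall n).1
  have hXd : ∀ n, ∀ x ∈ Set.Ioo a b, HasDerivAt (X (n+1))
      ((n+1 : ℂ) * X n x * (if (n+1) % 2 = 1 then g0 x ^ 2 else (g0 x ^ 2)⁻¹)) x :=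
    fun n => (hXall n).2.2
  have hXb : ∀ n, ∀ x ∈ Set.Ioo a b, ‖X n x‖ ≤ (M ^ 2 * C) ^ n := by
    intro n x hx
    refine le_trans ((hXall n).2.1 x hx) ?_
    exact pow_le_pow_left₀ (by positivity) (by nlinarith [habs x hx, abs_nonneg x]) n
  have hX0 : ∀ j, X (j+1) 0 = 0 := by
    intro j
    rw [show X (j+1) 0 = ((j:ℂ)+1) * ∫ t in (0:ℝ)..(0:ℝ),
      X j t * (if (j+1) % 2 = 1 then g0 t ^ 2 else (g0 t ^ 2)⁻¹) from rfl,
      intervalIntegral.integral_same, mul_zero]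
  have hX00 : ∀ z : ℝ, X 0 z = 1 := fun _ => rfl
  clear_value X
  -- the two series
  set S : ℝ → ℂ := fun y => ∑' k : ℕ, ω ^ (2*k) / ((2*k)! : ℂ) * X (2*k) y with hSdef
  set T : ℝ → ℂ := fun y => ∑' k : ℕ, ω ^ (2*k+1) / ((2*k+1)! : ℂ) * X (2*k+1) y with hTdef
  set r : ℝ := ‖ω‖ * (M ^ 2 * C) with hrdef
  have hrnn : 0 ≤ r := by positivity
  clear_value S T
  -- derivative of the even series, term by term
  have hfe : ∀ k : ℕ, ∀ y ∈ Set.Ioo a b,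
      HasDerivAt (fun z => ω ^ (2*k) / ((2*k)! : ℂ) * X (2*k) z)
        (ω ^ (2*k) / ((2*k)! : ℂ) * (((2*k : ℕ) : ℂ) * X (2*k-1) y * (g0 y ^ 2)⁻¹)) y := by
    intro k y hy
    match k with
    | 0 =>
      have h1 : (fun z : ℝ => ω ^ (2*0) / ((2*0)! : ℂ) * X (2*0) z)
          = fun _ => ω ^ (2*0) / ((2*0)! : ℂ) := by
        funext z; rw [show (2*0 : ℕ) = 0 from rfl, hX00, mul_one]
      rw [h1]
      convert hasDerivAt_const y (ω ^ (2*0) / ((2*0)! : ℂ)) using 1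
      rfl
      norm_num
    | k+1 =>
      have hd := (hXd (2*k+1) y hy).const_mul (ω ^ (2*(k+1)) / ((2*(k+1))! : ℂ))
      rw [if_neg (by omega)] at hd
      simp only [show 2*(k+1) = 2*k+1+1 from by ring, Nat.add_sub_cancel]
      rw [show 2*(k+1) = 2*k+1+1 from by ring] at hd
      convert hd using 1
      rfl
      push_cast
      ring
  have hfeb : ∀ k : ℕ, ∀ y ∈ Set.Ioo a b,
      ‖ω ^ (2*k) / ((2*k)! : ℂ) * (((2*k : ℕ) : ℂ) * X (2*k-1) y * (g0 y ^ 2)⁻¹)‖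
        ≤ ‖ω‖ * M ^ 2 * (r ^ (2*k-1) / (2*k-1)!) := by
    intro k y hy
    match k with
    | 0 =>
      simp only [Nat.mul_zero, Nat.cast_zero, zero_mul, mul_zero, norm_zero]
      positivity
    | k+1 =>
      rw [norm_mul, norm_mul, norm_mul, norm_div, norm_pow, Complex.norm_natCast,
        Complex.norm_natCast]
      simp only [show 2*(k+1) = 2*k+1+1 from by ring, Nat.add_sub_cancel]
      calc ‖ω‖ ^ (2*k+1+1) / ((2*k+1+1)! : ℝ) *
            (((2*k+1+1 : ℕ) : ℝ) * ‖X (2*k+1) y‖ * ‖(g0 y ^ 2)⁻¹‖)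
          ≤ ‖ω‖ ^ (2*k+1+1) / ((2*k+1+1)! : ℝ) *
            (((2*k+1+1 : ℕ) : ℝ) * (M ^ 2 * C) ^ (2*k+1) * M ^ 2) := by
            have h1 := hXb (2*k+1) y hy
            have h2 := hbe y hy
            gcongr <;> first | exact h1 | exact h2 | positivity | exact norm_nonneg _
        _ = ‖ω‖ * M ^ 2 * (r ^ (2*k+1) / (2*k+1)!) := by
            rw [hrdef, Nat.factorial_succ (2*k+1)]
            have hfne : ((2*k+1)! : ℝ) ≠ 0 := by positivity
            push_cast
            rw [mul_pow, mul_pow]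
            field_simp
            ring
  have hSsum0 : Summable (fun k : ℕ => ω ^ (2*k) / ((2*k)! : ℂ) * X (2*k) (0:ℝ)) := by
    apply summable_of_ne_finset_zero (s := ({0} : Finset ℕ))
    intro k hk
    obtain ⟨j, rfl⟩ := Nat.exists_eq_succ_of_ne_zero (by simpa using hk)
    rw [show 2*(j+1) = 2*j+1+1 from by ring, hX0 (2*j+1), mul_zero]
  have hue : Summable (fun k : ℕ => ‖ω‖ * M ^ 2 * (r ^ (2*k-1) / (2*k-1)!)) :=
    (summable_aux r (fun k => 2*k-1) (fun a b h => by simp only at h; omega)).mul_left _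
  have hSd : ∀ x ∈ Set.Ioo a b, HasDerivAt S
      (∑' k : ℕ, ω ^ (2*k) / ((2*k)! : ℂ) * (((2*k : ℕ) : ℂ) * X (2*k-1) x * (g0 x ^ 2)⁻¹)) x := by
    intro x hx
    rw [hSdef]
    exact hasDerivAt_tsum_of_isPreconnected hue isOpen_Ioo isPreconnected_Ioo
      hfe hfeb h0 hSsum0 hx
  -- derivative of the odd series, term by term
  have hfo : ∀ k : ℕ, ∀ y ∈ Set.Ioo a b,
      HasDerivAt (fun z => ω ^ (2*k+1) / ((2*k+1)! : ℂ) * X (2*k+1) z)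
        (ω ^ (2*k+1) / ((2*k+1)! : ℂ) * (((2*k+1 : ℕ) : ℂ) * X (2*k) y * g0 y ^ 2)) y := by
    intro k y hy
    have hd := (hXd (2*k) y hy).const_mul (ω ^ (2*k+1) / ((2*k+1)! : ℂ))
    rw [if_pos (by omega)] at hd
    convert hd using 1
    rfl
    push_cast
    ring
  have hfob : ∀ k : ℕ, ∀ y ∈ Set.Ioo a b,
      ‖ω ^ (2*k+1) / ((2*k+1)! : ℂ) * (((2*k+1 : ℕ) : ℂ) * X (2*k) y * g0 y ^ 2)‖
        ≤ ‖ω‖ * M ^ 2 * (r ^ (2*k) / (2*k)!) := by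
    intro k y hy
    rw [norm_mul, norm_mul, norm_mul, norm_div, norm_pow, Complex.norm_natCast,
      Complex.norm_natCast]
    calc ‖ω‖ ^ (2*k+1) / ((2*k+1)! : ℝ) *
          (((2*k+1 : ℕ) : ℝ) * ‖X (2*k) y‖ * ‖g0 y ^ 2‖)
        ≤ ‖ω‖ ^ (2*k+1) / ((2*k+1)! : ℝ) *
          (((2*k+1 : ℕ) : ℝ) * (M ^ 2 * C) ^ (2*k) * M ^ 2) := by
          have h1 := hXb (2*k) y hy
          have h2 := hbo y hy
          gcongr <;> first | exact h1 | exact h2 | positivity | exact norm_nonneg _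
      _ = ‖ω‖ * M ^ 2 * (r ^ (2*k) / (2*k)!) := by
          rw [hrdef, Nat.factorial_succ (2*k)]
          have hfne : ((2*k)! : ℝ) ≠ 0 := by positivity
          push_cast
          rw [mul_pow]
          field_simp
          ring
  have hTsum0 : Summable (fun k : ℕ => ω ^ (2*k+1) / ((2*k+1)! : ℂ) * X (2*k+1) (0:ℝ)) := by
    have : (fun k : ℕ => ω ^ (2*k+1) / ((2*k+1)! : ℂ) * X (2*k+1) (0:ℝ)) = fun _ => 0 := by
      funext k; rw [hX0 (2*k), mul_zero]
    rw [this]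
    exact summable_zero
  have huo : Summable (fun k : ℕ => ‖ω‖ * M ^ 2 * (r ^ (2*k) / (2*k)!)) :=
    (summable_aux r (fun k => 2*k) (fun a b h => by simp only at h; omega)).mul_left _
  have hTd : ∀ x ∈ Set.Ioo a b, HasDerivAt T
      (∑' k : ℕ, ω ^ (2*k+1) / ((2*k+1)! : ℂ) * (((2*k+1 : ℕ) : ℂ) * X (2*k) x * g0 x ^ 2)) x := by
    intro x hx
    rw [hTdef]
    exact hasDerivAt_tsum_of_isPreconnected huo isOpen_Ioo isPreconnected_Ioo
      hfo hfob h0 hTsum0 hx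
  -- identify the derivatives of the series
  have hDT : ∀ x : ℝ, (∑' k : ℕ, ω ^ (2*k+1) / ((2*k+1)! : ℂ) *
      (((2*k+1 : ℕ) : ℂ) * X (2*k) x * g0 x ^ 2)) = ω * g0 x ^ 2 * S x := by
    intro x
    rw [hSdef, ← tsum_mul_left]
    apply tsum_congr
    intro k
    generalize g0 x ^ 2 = G
    have hfne : ((2*k)! : ℂ) ≠ 0 := Nat.cast_ne_zero.mpr (Nat.factorial_ne_zero _)
    rw [Nat.factorial_succ (2*k)]
    push_cast
    have h1 : ((2:ℂ)*k+1) ≠ 0 := by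
      intro h
      have := congrArg Complex.re h
      push_cast at this
      norm_num at this
      linarith [Nat.cast_nonneg (α := ℝ) k]
    field_simp
    ring
  have hDS : ∀ x ∈ Set.Ioo a b, (∑' k : ℕ, ω ^ (2*k) / ((2*k)! : ℂ) *
      (((2*k : ℕ) : ℂ) * X (2*k-1) x * (g0 x ^ 2)⁻¹)) = ω * (g0 x ^ 2)⁻¹ * T x := by
    intro x hx
    have hsum : Summable (fun k : ℕ => ω ^ (2*k) / ((2*k)! : ℂ) *
        (((2*k : ℕ) : ℂ) * X (2*k-1) x * (g0 x ^ 2)⁻¹)) :=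
      Summable.of_norm_bounded hue (fun k => hfeb k x hx)
    rw [hsum.tsum_eq_zero_add]
    simp only [Nat.mul_zero, Nat.cast_zero, zero_mul, mul_zero, zero_add]
    rw [hTdef, ← tsum_mul_left]
    apply tsum_congr
    intro k
    simp only [show ∀ k : ℕ, 2*(k+1) = 2*k+1+1 from fun k => by ring, Nat.add_sub_cancel]
    generalize (g0 x ^ 2)⁻¹ = B
    have hfne : ((2*k+1)! : ℂ) ≠ 0 := Nat.cast_ne_zero.mpr (Nat.factorial_ne_zero _)
    rw [Nat.factorial_succ (2*k+1)]
    push_cast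
    have h1 : ((2:ℂ)*k+1+1) ≠ 0 := by
      intro h
      have := congrArg Complex.re h
      push_cast at this
      norm_num at this
      linarith [Nat.cast_nonneg (α := ℝ) k]
    field_simp
    ring
  have hSd' : ∀ x ∈ Set.Ioo a b, HasDerivAt S (ω * (g0 x ^ 2)⁻¹ * T x) x :=
    fun x hx => hDS x hx ▸ hSd x hx
  have hTd' : ∀ x ∈ Set.Ioo a b, HasDerivAt T (ω * g0 x ^ 2 * S x) x :=
    fun x hx => hDT x ▸ hTd x hx
  -- derivatives of g0
  have hg0' : ∀ x ∈ Set.Ioo a b, HasDerivAt g0 (deriv g0 x) x := by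
    intro x hx
    exact ((hg.differentiableOn (by norm_num)).differentiableAt
      (isOpen_Ioo.mem_nhds hx)).hasDerivAt
  have hg0'' : ∀ x ∈ Set.Ioo a b, HasDerivAt (deriv g0) (deriv (deriv g0) x) x := by
    have h2 : ContDiffOn ℝ (1+1) g0 (Set.Ioo a b) := by norm_num; exact hg
    rw [contDiffOn_succ_iff_deriv_of_isOpen isOpen_Ioo] at h2
    intro x hx
    exact ((h2.2.2.differentiableOn one_ne_zero).differentiableAt
      (isOpen_Ioo.mem_nhds hx)).hasDerivAt
  -- u1 in terms of S
  have hu1S : u1 = fun y => g0 y * S y := by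
    rw [hu1, hSdef]
  have hu1d : ∀ x ∈ Set.Ioo a b, HasDerivAt u1
      (deriv g0 x * S x + g0 x * (ω * (g0 x ^ 2)⁻¹ * T x)) x := by
    intro x hx
    rw [hu1S]
    exact (hg0' x hx).mul (hSd' x hx)
  -- part 1
  have key1 : ∀ x ∈ Set.Ioo a b, v1 x = ω / g0 x * T x := by
    intro x hx
    have hgx := hg0 x hx
    rw [hv1]
    simp only
    rw [(hu1d x hx).deriv, hu1S]
    simp only
    field_simp
    ring
  constructor
  · intro x hx
    rw [key1 x hx, hTdef]
  -- part 2
  · have hv1T : ∀ y ∈ Set.Ioo a b, v1 y = ω * T y / g0 y := by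
      intro y hy
      rw [key1 y hy]
      ring
    have hderiv_v1 : ∀ y ∈ Set.Ioo a b, deriv v1 y =
        (ω * (ω * g0 y ^ 2 * S y) * g0 y - ω * T y * deriv g0 y) / g0 y ^ 2 := by
      intro y hy
      have hEq : v1 =ᶠ[nhds y] fun z => ω * T z / g0 z :=
        Filter.eventuallyEq_of_mem (isOpen_Ioo.mem_nhds hy) (fun z hz => hv1T z hz)
      rw [hEq.deriv_eq]
      have hd : HasDerivAt (fun z => ω * T z / g0 z)
          ((ω * (ω * g0 y ^ 2 * S y) * g0 y - ω * T y * deriv g0 y) / g0 y ^ 2) y :=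
        ((hTd' y hy).const_mul ω).div (hg0' y hy) (hg0 y hy)
      exact hd.deriv
    intro x hx
    have hgx := hg0 x hx
    have h1 : HasDerivAt (fun y => g0 y ^ 2) (deriv g0 x * g0 x + g0 x * deriv g0 x) x := by
      have h := (hg0' x hx).mul (hg0' x hx); simp only [← pow_two] at h; exact h
    have h2 : HasDerivAt (fun y => ω * g0 y ^ 2 * S y) _ x :=
      (h1.const_mul ω).mul (hSd' x hx)
    have h3 : HasDerivAt (fun y => ω * (ω * g0 y ^ 2 * S y) * g0 y) _ x :=
      (h2.const_mul ω).mul (hg0' x hx)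
    have h4 : HasDerivAt (fun y => ω * T y * deriv g0 y) _ x :=
      ((hTd' x hx).const_mul ω).mul (hg0'' x hx)
    have hψ : HasDerivAt (fun y =>
        (ω * (ω * g0 y ^ 2 * S y) * g0 y - ω * T y * deriv g0 y) / g0 y ^ 2) _ x :=
      (h3.sub h4).div h1 (pow_ne_zero 2 hgx)
    have hEq2 : deriv v1 =ᶠ[nhds x] fun y =>
        (ω * (ω * g0 y ^ 2 * S y) * g0 y - ω * T y * deriv g0 y) / g0 y ^ 2 :=
      Filter.eventuallyEq_of_mem (isOpen_Ioo.mem_nhds hx) (fun z hz => hderiv_v1 z hz)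
    rw [hEq2.deriv_eq, hψ.deriv, hv1T x hx, heq x hx]
    simp only [Pi.sub_apply]
    field_simp
    ring
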